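/- The set Σ_n(R) of all finite sums of matrices of the form A^T A with A ∈ M_n(R) is a preordering in M_n(R); that is, it is a quadratic module and its image under the (1,1)-entry map p is closed under multiplication. -/

import Mathlib

open Matrix

/-- A quadratic module in `M_n(R)`. -/
def IsQM {n : ℕ} {R : Type*} [CommRing R] (M : Set (Matrix (Fin n) (Fin n) R)) : Prop :=
  (∀ A ∈ M, A.IsSymm) ∧ (1 : Matrix (Fin n) (Fin n) R) ∈ M ∧
  (∀ a ∈ M, ∀ b ∈ M, a + b ∈ M) ∧
  ∀ (A : Matrix (Fin n) (Fin n) R), ∀ m ∈ M, Aᵀ * m * A ∈ M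

/-- `Σ_n(R)`: finite sums of matrices `Aᵀ * A`. -/
def SigmaN (n : ℕ) (R : Type*) [CommRing R] : Set (Matrix (Fin n) (Fin n) R) :=
  (AddSubmonoid.closure {A : Matrix (Fin n) (Fin n) R |
    ∃ B : Matrix (Fin n) (Fin n) R, A = Bᵀ * B} : AddSubmonoid (Matrix (Fin n) (Fin n) R))

lemma sq_closure_mul {R : Type*} [CommRing R]
    {x y : R} (hx : x ∈ AddSubmonoid.closure {r : R | ∃ s, r = s * s})
    (hy : y ∈ AddSubmonoid.closure {r : R | ∃ s, r = s * s}) :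
    x * y ∈ AddSubmonoid.closure {r : R | ∃ s, r = s * s} := by
  induction hx using AddSubmonoid.closure_induction with
  | mem a ha =>
    obtain ⟨s, rfl⟩ := ha
    induction hy using AddSubmonoid.closure_induction with
    | mem b hb =>
      obtain ⟨t, rfl⟩ := hb
      exact AddSubmonoid.subset_closure ⟨s * t, by ring⟩
    | zero => simpa using AddSubmonoid.zero_mem _
    | add c d _ _ hc hd =>
      rw [mul_add]; exact AddSubmonoid.add_mem _ hc hd
  | zero => simpa using AddSubmonoid.zero_mem _
  | add c d _ _ hc hd =>
    rw [add_mul]; exact AddSubmonoid.add_mem _ hc hd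

/-- `Σ_n(R)` is a preordering: it is a quadratic module and its image under the
(1,1)-entry map `p` is closed under multiplication. -/
theorem stmt3 (n : ℕ) [NeZero n] (R : Type*) [CommRing R] :
    IsQM (SigmaN n R) ∧
      ∀ a ∈ (fun A : Matrix (Fin n) (Fin n) R => A 0 0) '' SigmaN n R,
        ∀ b ∈ (fun A : Matrix (Fin n) (Fin n) R => A 0 0) '' SigmaN n R,
          a * b ∈ (fun A : Matrix (Fin n) (Fin n) R => A 0 0) '' SigmaN n R := by
  have himage : (fun A : Matrix (Fin n) (Fin n) R => A 0 0) '' SigmaN n R =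
      (AddSubmonoid.closure {r : R | ∃ s, r = s * s} : Set R) := by
    ext x
    constructor
    · rintro ⟨A, hA, rfl⟩
      induction hA using AddSubmonoid.closure_induction with
      | mem a ha =>
        obtain ⟨B, rfl⟩ := ha
        have : (Bᵀ * B) 0 0 = ∑ k, B k 0 * B k 0 := by
          simp [Matrix.mul_apply, Matrix.transpose_apply]
        show (Bᵀ * B) 0 0 ∈ _
        rw [this]
        exact AddSubmonoid.sum_mem _ fun k _ =>
          AddSubmonoid.subset_closure ⟨B k 0, rfl⟩
      | zero => simpa using AddSubmonoid.zero_mem _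
      | add c d _ _ hc hd =>
        simpa using AddSubmonoid.add_mem _ hc hd
    · intro hx
      induction hx using AddSubmonoid.closure_induction with
      | mem a ha =>
        obtain ⟨s, rfl⟩ := ha
        refine ⟨(Matrix.single 0 0 s)ᵀ * Matrix.single 0 0 s,
          AddSubmonoid.subset_closure ⟨_, rfl⟩, ?_⟩
        simp [Matrix.mul_apply, Matrix.transpose_apply, Matrix.single,
          Finset.sum_ite_eq]
      | zero => exact ⟨0, AddSubmonoid.zero_mem _, rfl⟩
      | add c d _ _ hc hd =>
        obtain ⟨A, hA, rfl⟩ := hc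
        obtain ⟨B, hB, rfl⟩ := hd
        exact ⟨A + B, AddSubmonoid.add_mem _ hA hB, rfl⟩
  constructor
  · refine ⟨?_, ?_, ?_, ?_⟩
    · intro A hA
      induction hA using AddSubmonoid.closure_induction with
      | mem a ha =>
        obtain ⟨B, rfl⟩ := ha
        unfold Matrix.IsSymm
        rw [Matrix.transpose_mul, Matrix.transpose_transpose]
      | zero => simp [Matrix.IsSymm]
      | add c d _ _ hc hd => exact Matrix.IsSymm.add hc hd
    · have : (1 : Matrix (Fin n) (Fin n) R) = (1 : Matrix (Fin n) (Fin n) R)ᵀ * 1 := by simp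
      rw [this]
      exact AddSubmonoid.subset_closure ⟨1, rfl⟩
    · intro a ha b hb
      exact AddSubmonoid.add_mem _ ha hb
    · intro A m hm
      induction hm using AddSubmonoid.closure_induction with
      | mem a ha =>
        obtain ⟨B, rfl⟩ := ha
        have : Aᵀ * (Bᵀ * B) * A = (B * A)ᵀ * (B * A) := by
          rw [Matrix.transpose_mul]; noncomm_ring
        rw [this]
        exact AddSubmonoid.subset_closure ⟨_, rfl⟩
      | zero => rw [Matrix.mul_zero, Matrix.zero_mul]; exact AddSubmonoid.zero_mem _
      | add c d _ _ hc hd =>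
        have : Aᵀ * (c + d) * A = Aᵀ * c * A + Aᵀ * d * A := by noncomm_ring
        rw [this]
        exact AddSubmonoid.add_mem _ hc hd
  · rw [himage]
    intro a ha b hb
    exact sq_closure_mul ha hb
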